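/- arXiv:1611.00493 — 2 statements merged into one kernel-verified Lean document; each statement's English description precedes it below -/
import Mathlib

section
/- For all integers 1 ≤ m ≤ n, max_{m ≤ k ≤ n} |E[Zₖ*] − E[Zₙ*]| ≤ 2·Gₙ·P(T_g > m) + E[−Z_{T_g}; m < T_g ≤ n], where Gₙ := max_{k≤n} |gₖ|. -/
open MeasureTheory ProbabilityTheory Filter Finset

noncomputable section
namespace FirstPassage

variable {Ω : Type*}

/-- Partial sums `S n = X 1 + ... + X n` (so `S 0 = 0`). -/
def S (X : ℕ → Ω → ℝ) (n : ℕ) (ω : Ω) : ℝ := ∑ k ∈ Finset.Icc 1 n, X k ω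

/-- The event `{T_g > n}`: the walk stays strictly above the boundary up to time `n`. -/
def Surv (X : ℕ → Ω → ℝ) (g : ℕ → ℝ) (n : ℕ) : Set Ω :=
  {ω | ∀ k ∈ Finset.Icc 1 n, g k < S X k ω}

/-- The first passage time `T_g = min {n ≥ 1 : S n ≤ g n}` (junk value `0` if the walk
never crosses the boundary; note `sInf ∅ = 0` in `ℕ`). -/
def T (X : ℕ → Ω → ℝ) (g : ℕ → ℝ) (ω : Ω) : ℕ :=
  sInf {n | 1 ≤ n ∧ S X n ω ≤ g n}

/-- `Z n = S n - g n`. -/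
def Z (X : ℕ → Ω → ℝ) (g : ℕ → ℝ) (n : ℕ) (ω : Ω) : ℝ := S X n ω - g n

/-- `Z* n = Z n · 1{T_g > n}`. -/
def Zstar (X : ℕ → Ω → ℝ) (g : ℕ → ℝ) (n : ℕ) : Ω → ℝ :=
  (Surv X g n).indicator (Z X g n)

/-- `B n = (σ 1 ^ 2 + ... + σ n ^ 2) ^ (1/2)` where `σ k ^ 2 = E[(X k)^2]`. -/
def B [MeasurableSpace Ω] (μ : Measure Ω) (X : ℕ → Ω → ℝ) (n : ℕ) : ℝ :=
  Real.sqrt (∑ k ∈ Finset.Icc 1 n, ∫ ω, (X k ω) ^ 2 ∂μ)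

/-- `S_{T_g}`, the walk evaluated at the first passage time. -/
def ST (X : ℕ → Ω → ℝ) (g : ℕ → ℝ) (ω : Ω) : ℝ := S X (T X g ω) ω

/-! ### Auxiliary combinatorial lemmas -/

/-- Abel summation for the telescoping-type sums we need. -/
lemma abel_id (a p : ℕ → ℝ) {k n : ℕ} (h : k ≤ n) :
    ∑ j ∈ Finset.Ico k n, (a (j+1) - a j) * p j
      = a n * p n - a k * p k + ∑ j ∈ Finset.Ioc k n, a j * (p (j-1) - p j) := by
  induction n, h using Nat.le_induction with
  | base => simp
  | succ n hkn ih =>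
    rw [Finset.sum_Ico_succ_top hkn, ih, Finset.sum_Ioc_succ_top hkn]
    have h' : (n + 1) - 1 = n := rfl
    rw [h']; ring

lemma telescope_id (p : ℕ → ℝ) {k n : ℕ} (h : k ≤ n) :
    ∑ j ∈ Finset.Ioc k n, (p (j-1) - p j) = p k - p n := by
  induction n, h using Nat.le_induction with
  | base => simp
  | succ n hkn ih =>
    rw [Finset.sum_Ioc_succ_top hkn, ih]
    have h' : (n + 1) - 1 = n := rfl
    rw [h']; ring

/-- Bound on the Abel-transformed sum. -/
lemma abel_bound (a p : ℕ → ℝ) (G : ℝ) {k n : ℕ} (hk : 1 ≤ k) (h : k ≤ n)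
    (hG : ∀ j, 1 ≤ j → j ≤ n → |a j| ≤ G)
    (hp0 : ∀ j, 0 ≤ p j) (hpa : ∀ i j, i ≤ j → p j ≤ p i) :
    |∑ j ∈ Finset.Ico k n, (a (j+1) - a j) * p j| ≤ 2 * G * p k := by
  rw [abel_id a p h]
  have h1 : |a n * p n - a k * p k + ∑ j ∈ Finset.Ioc k n, a j * (p (j-1) - p j)|
      ≤ |a n| * p n + |a k| * p k + ∑ j ∈ Finset.Ioc k n, |a j| * (p (j-1) - p j) := by
    calc _ ≤ |a n * p n - a k * p k| + |∑ j ∈ Finset.Ioc k n, a j * (p (j-1) - p j)| :=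
          abs_add_le _ _
      _ ≤ (|a n * p n| + |a k * p k|) + ∑ j ∈ Finset.Ioc k n, |a j * (p (j-1) - p j)| := by
          gcongr
          · exact abs_sub _ _
          · exact Finset.abs_sum_le_sum_abs _ _
      _ ≤ _ := by
          rw [abs_mul, abs_mul, abs_of_nonneg (hp0 n), abs_of_nonneg (hp0 k)]
          gcongr with j hj
          rw [abs_mul]
          gcongr
          rw [abs_of_nonneg]
          exact sub_nonneg.mpr (hpa _ _ (Nat.sub_le j 1))
  refine h1.trans ?_
  have h2 : ∑ j ∈ Finset.Ioc k n, |a j| * (p (j-1) - p j)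
      ≤ ∑ j ∈ Finset.Ioc k n, G * (p (j-1) - p j) := by
    refine Finset.sum_le_sum fun j hj => ?_
    have hj' := Finset.mem_Ioc.mp hj
    have hja : |a j| ≤ G := hG j (by omega) hj'.2
    have hnn : 0 ≤ p (j-1) - p j := sub_nonneg.mpr (hpa _ _ (Nat.sub_le j 1))
    exact mul_le_mul_of_nonneg_right hja hnn
  have h3 : |a n| ≤ G := hG n (le_trans hk h) le_rfl
  have h4 : |a k| ≤ G := hG k hk h
  calc |a n| * p n + |a k| * p k + ∑ j ∈ Finset.Ioc k n, |a j| * (p (j-1) - p j)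
      ≤ G * p n + G * p k + ∑ j ∈ Finset.Ioc k n, G * (p (j-1) - p j) :=
        add_le_add (add_le_add (mul_le_mul_of_nonneg_right h3 (hp0 n))
          (mul_le_mul_of_nonneg_right h4 (hp0 k))) h2
    _ = G * p n + G * p k + G * (p k - p n) := by
        rw [← Finset.mul_sum, telescope_id p h]
    _ = 2 * G * p k := by ring

/-! ### Characterization of the first passage time -/

section TChar
variable (X : ℕ → Ω → ℝ) (g : ℕ → ℝ)

lemma diff_eq_T (j : ℕ) :
    Surv X g j \ Surv X g (j+1) = {ω | T X g ω = j + 1} := by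
  ext ω
  simp only [Set.mem_diff, Set.mem_setOf_eq]
  constructor
  · rintro ⟨h1, h2⟩
    simp only [Surv, Set.mem_setOf_eq] at h1 h2
    push_neg at h2
    obtain ⟨i, hi, hile⟩ := h2
    rcases Finset.mem_Icc.mp hi with ⟨hi1, hi2⟩
    have hij : i = j + 1 := by
      by_contra hne
      exact absurd hile (not_le.mpr (h1 i (Finset.mem_Icc.mpr ⟨hi1, by omega⟩)))
    subst hij
    have hmem : j + 1 ∈ {n | 1 ≤ n ∧ S X n ω ≤ g n} := ⟨by omega, hile⟩
    refine le_antisymm (Nat.sInf_le hmem) ?_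
    have hall : ∀ i ∈ {n | 1 ≤ n ∧ S X n ω ≤ g n}, j + 1 ≤ i := by
      rintro i ⟨hia, hib⟩
      by_contra hlt
      exact absurd hib (not_le.mpr (h1 i (Finset.mem_Icc.mpr ⟨hia, by omega⟩)))
    exact hall _ (Nat.sInf_mem ⟨_, hmem⟩)
  · intro hT
    have hne : {n | 1 ≤ n ∧ S X n ω ≤ g n}.Nonempty := by
      by_contra hne
      rw [Set.not_nonempty_iff_eq_empty] at hne
      have h0 : T X g ω = 0 := by rw [T, hne, Nat.sInf_empty]
      omega
    have hmem := Nat.sInf_mem hne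
    rw [show sInf {n | 1 ≤ n ∧ S X n ω ≤ g n} = T X g ω from rfl, hT] at hmem
    have hSurvj : ω ∈ Surv X g j := by
      intro i hi
      rcases Finset.mem_Icc.mp hi with ⟨ha, hb⟩
      by_contra hle
      push_neg at hle
      have : T X g ω ≤ i := Nat.sInf_le ⟨ha, hle⟩
      omega
    refine ⟨hSurvj, fun hSurv => ?_⟩
    exact absurd hmem.2 (not_le.mpr (hSurv (j+1) (Finset.mem_Icc.mpr ⟨by omega, le_rfl⟩)))

lemma union_eq (m n : ℕ) :
    {ω | m < T X g ω ∧ T X g ω ≤ n}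
      = ⋃ j ∈ Finset.Ico m n, (Surv X g j \ Surv X g (j+1)) := by
  ext ω
  simp only [Set.mem_setOf_eq, Set.mem_iUnion, diff_eq_T, Finset.mem_Ico, exists_prop]
  constructor
  · rintro ⟨h1, h2⟩
    exact ⟨T X g ω - 1, ⟨by omega, by omega⟩, by omega⟩
  · rintro ⟨j, ⟨hj1, hj2⟩, hT⟩
    omega

lemma Z_nonpos_on_diff (j : ℕ) :
    ∀ ω ∈ Surv X g j \ Surv X g (j+1), Z X g (j+1) ω ≤ 0 := by
  intro ω hω
  rw [diff_eq_T] at hω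
  have hne : {n | 1 ≤ n ∧ S X n ω ≤ g n}.Nonempty := by
    by_contra hne
    rw [Set.not_nonempty_iff_eq_empty] at hne
    have h0 : T X g ω = 0 := by rw [T, hne, Nat.sInf_empty]
    rw [Set.mem_setOf_eq] at hω
    omega
  have hmem := Nat.sInf_mem hne
  rw [show sInf {n | 1 ≤ n ∧ S X n ω ≤ g n} = T X g ω from rfl] at hmem
  rw [Set.mem_setOf_eq] at hω
  rw [hω] at hmem
  simp only [Z]
  linarith [hmem.2]

end TChar

/-! ### Measure-theoretic lemmas -/

section Aux

variable [MeasurableSpace Ω] (μ : Measure Ω) [IsProbabilityMeasure μ]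
  (X : ℕ → Ω → ℝ) (g : ℕ → ℝ)

lemma measurable_S (hmeas : ∀ k, Measurable (X k)) (n : ℕ) : Measurable (S X n) :=
  Finset.measurable_sum _ fun k _ => hmeas k

lemma measurableSet_Surv (hmeas : ∀ k, Measurable (X k)) (n : ℕ) :
    MeasurableSet (Surv X g n) := by
  have h : Surv X g n = ⋂ k ∈ Finset.Icc 1 n, {ω | g k < S X k ω} := by
    ext ω; simp [Surv]
  rw [h]
  exact MeasurableSet.biInter (Finset.Icc 1 n).countable_toSet
    fun k _ => measurableSet_lt measurable_const (measurable_S X hmeas k)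

lemma integrable_S (hL2 : ∀ k, 1 ≤ k → MemLp (X k) 2 μ) (n : ℕ) :
    Integrable (S X n) μ := by
  apply integrable_finset_sum
  intro k hk
  exact (hL2 k (Finset.mem_Icc.mp hk).1).integrable (by norm_num)

lemma integrable_Z (hL2 : ∀ k, 1 ≤ k → MemLp (X k) 2 μ) (n : ℕ) :
    Integrable (Z X g n) μ :=
  (integrable_S μ X hL2 n).sub (integrable_const _)

omit [MeasurableSpace Ω] in
lemma Surv_antitone {i j : ℕ} (h : i ≤ j) : Surv X g j ⊆ Surv X g i := by
  intro ω hω k hk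
  exact hω k (Finset.mem_Icc.mpr ⟨(Finset.mem_Icc.mp hk).1, le_trans (Finset.mem_Icc.mp hk).2 h⟩)

lemma setIntegral_X_eq_zero (hmeas : ∀ k, Measurable (X k))
    (hindep : iIndepFun X μ)
    (hL2 : ∀ k, 1 ≤ k → MemLp (X k) 2 μ)
    (hmean : ∀ k, 1 ≤ k → ∫ ω, X k ω ∂μ = 0) (j : ℕ) :
    ∫ ω in Surv X g j, X (j+1) ω ∂μ = 0 := by
  classical
  set A : Set ((Finset.Icc 1 j : Finset ℕ) → ℝ) :=
    {v | ∀ i ∈ Finset.Icc 1 j, g i < ∑ l : (Finset.Icc 1 j : Finset ℕ),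
      if (l : ℕ) ≤ i then v l else 0} with hAdef
  have hA : MeasurableSet A := by
    have h : A = ⋂ i ∈ Finset.Icc 1 j,
        {v : (Finset.Icc 1 j : Finset ℕ) → ℝ | g i < ∑ l : (Finset.Icc 1 j : Finset ℕ),
          if (l : ℕ) ≤ i then v l else 0} := by
      ext v; simp [hAdef]
    rw [h]
    refine MeasurableSet.biInter (Finset.Icc 1 j).countable_toSet fun i _ => ?_
    refine measurableSet_lt measurable_const (Finset.measurable_sum _ fun l _ => ?_)
    by_cases hl : (l : ℕ) ≤ i
    · simpa [hl] using measurable_pi_apply l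
    · simp [hl]
  set W : Ω → (Finset.Icc 1 j : Finset ℕ) → ℝ := fun ω l => X l ω with hWdef
  have hsum : ∀ (i : ℕ), i ∈ Finset.Icc 1 j → ∀ ω,
      (∑ l : (Finset.Icc 1 j : Finset ℕ), if (l : ℕ) ≤ i then W ω l else 0) = S X i ω := by
    intro i hi ω
    rw [Finset.sum_coe_sort (Finset.Icc 1 j) (fun l => if (l : ℕ) ≤ i then X l ω else 0)]
    rw [← Finset.sum_filter]
    have h : (Finset.Icc 1 j).filter (fun l => l ≤ i) = Finset.Icc 1 i := by
      ext l
      simp only [Finset.mem_filter, Finset.mem_Icc]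
      have := (Finset.mem_Icc.mp hi).2
      omega
    rw [h]; rfl
  have hSurvW : Surv X g j = W ⁻¹' A := by
    ext ω
    simp only [Surv, Set.mem_setOf_eq, Set.mem_preimage, hAdef]
    exact forall₂_congr fun i hi => by rw [hsum i hi ω]
  have hdisj : Disjoint (Finset.Icc 1 j) ({j+1} : Finset ℕ) := by
    simp [Finset.disjoint_singleton_right]
  have hIF := hindep.indepFun_finset (Finset.Icc 1 j) {j+1} hdisj hmeas
  have heval : Measurable fun v : (({j+1} : Finset ℕ) : Type) → ℝ =>
      v ⟨j+1, Finset.mem_singleton_self _⟩ := measurable_pi_apply _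
  have hφ : Measurable (A.indicator (fun _ => (1:ℝ))) := measurable_one.indicator hA
  have hIndep : IndepFun ((Surv X g j).indicator (fun _ => (1:ℝ))) (X (j+1)) μ := by
    have h := hIF.comp hφ heval
    convert h using 1
    funext ω
    by_cases hω : ω ∈ Surv X g j
    · have hmem : W ω ∈ A := by rwa [hSurvW] at hω
      simp [Set.indicator_of_mem hω, Function.comp]
      exact (Set.indicator_of_mem hmem (fun _ => (1:ℝ))).symm
    · have hmem : W ω ∉ A := by rwa [hSurvW] at hω
      simp [Set.indicator_of_notMem hω, Function.comp]
      exact (Set.indicator_of_notMem hmem _).symm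
    rfl
  have hSet := measurableSet_Surv X g hmeas j
  have h1 : ∫ ω in Surv X g j, X (j+1) ω ∂μ
      = ∫ ω, ((Surv X g j).indicator (fun _ => (1:ℝ)) * X (j+1)) ω ∂μ := by
    rw [← integral_indicator hSet]
    congr 1
    funext ω
    by_cases hω : ω ∈ Surv X g j <;>
      simp [Set.indicator_of_mem, Set.indicator_of_notMem, hω]
  rw [h1, hIndep.integral_mul_eq_mul_integral
    ((integrable_const (1:ℝ)).indicator hSet).aestronglyMeasurable ((hL2 (j+1) (by omega)).integrable (by norm_num)).aestronglyMeasurable,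
    hmean (j+1) (by omega), mul_zero]

/-- The one-step identity. -/
lemma step_id (hmeas : ∀ k, Measurable (X k))
    (hindep : iIndepFun X μ)
    (hL2 : ∀ k, 1 ≤ k → MemLp (X k) 2 μ)
    (hmean : ∀ k, 1 ≤ k → ∫ ω, X k ω ∂μ = 0) (j : ℕ) :
    (∫ ω, Zstar X g j ω ∂μ) - (∫ ω, Zstar X g (j+1) ω ∂μ)
      = (g (j+1) - g j) * (μ (Surv X g j)).toReal
        + ∫ ω in Surv X g j \ Surv X g (j+1), Z X g (j+1) ω ∂μ := by
  have hSj := measurableSet_Surv X g hmeas j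
  have hSj1 := measurableSet_Surv X g hmeas (j+1)
  have hsub : Surv X g (j+1) ⊆ Surv X g j := Surv_antitone X g (Nat.le_succ j)
  have hZj := integrable_Z μ X g hL2 j
  have hZj1 := integrable_Z μ X g hL2 (j+1)
  have hXint : Integrable (X (j+1)) μ := (hL2 (j+1) (by omega)).integrable (by norm_num)
  have hEj : ∫ ω, Zstar X g j ω ∂μ = ∫ ω in Surv X g j, Z X g j ω ∂μ := by
    rw [← integral_indicator hSj]; rfl
  have hEj1 : ∫ ω, Zstar X g (j+1) ω ∂μ = ∫ ω in Surv X g (j+1), Z X g (j+1) ω ∂μ := by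
    rw [← integral_indicator hSj1]; rfl
  have hdiff : ∫ ω in Surv X g j \ Surv X g (j+1), Z X g (j+1) ω ∂μ
      = ∫ ω in Surv X g j, Z X g (j+1) ω ∂μ - ∫ ω in Surv X g (j+1), Z X g (j+1) ω ∂μ :=
    integral_diff hSj1 hZj1.integrableOn hsub
  have hZdec : ∀ ω, Z X g (j+1) ω = Z X g j ω + X (j+1) ω + (g j - g (j+1)) := by
    intro ω
    simp only [Z, S]
    rw [Finset.sum_Icc_succ_top (by omega : 1 ≤ j + 1)]
    ring
  have hint : ∫ ω in Surv X g j, Z X g (j+1) ω ∂μ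
      = ∫ ω in Surv X g j, Z X g j ω ∂μ + (g j - g (j+1)) * (μ (Surv X g j)).toReal := by
    calc ∫ ω in Surv X g j, Z X g (j+1) ω ∂μ
        = ∫ ω in Surv X g j, (Z X g j ω + X (j+1) ω + (g j - g (j+1))) ∂μ :=
          setIntegral_congr_fun hSj fun ω _ => hZdec ω
      _ = (∫ ω in Surv X g j, (Z X g j ω + X (j+1) ω) ∂μ)
            + ∫ _ω in Surv X g j, (g j - g (j+1)) ∂μ := by
          exact integral_add (hZj.integrableOn.add hXint.integrableOn)
            (integrable_const _)
      _ = (∫ ω in Surv X g j, Z X g j ω ∂μ) + (∫ ω in Surv X g j, X (j+1) ω ∂μ)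
            + ∫ _ω in Surv X g j, (g j - g (j+1)) ∂μ := by
          rw [integral_add hZj.integrableOn hXint.integrableOn]
      _ = ∫ ω in Surv X g j, Z X g j ω ∂μ + (g j - g (j+1)) * (μ (Surv X g j)).toReal := by
          rw [setIntegral_X_eq_zero μ X g hmeas hindep hL2 hmean j, setIntegral_const]
          simp [mul_comm, Measure.real]
  rw [hEj, hEj1]
  rw [hdiff, hint]
  ring

/-- The telescoped identity. -/
lemma sum_id (hmeas : ∀ k, Measurable (X k))
    (hindep : iIndepFun X μ)
    (hL2 : ∀ k, 1 ≤ k → MemLp (X k) 2 μ)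
    (hmean : ∀ k, 1 ≤ k → ∫ ω, X k ω ∂μ = 0) {k n : ℕ} (h : k ≤ n) :
    (∫ ω, Zstar X g k ω ∂μ) - (∫ ω, Zstar X g n ω ∂μ)
      = (∑ j ∈ Finset.Ico k n, (g (j+1) - g j) * (μ (Surv X g j)).toReal)
        + ∑ j ∈ Finset.Ico k n, ∫ ω in Surv X g j \ Surv X g (j+1), Z X g (j+1) ω ∂μ := by
  induction n, h using Nat.le_induction with
  | base => simp
  | succ n hkn ih =>
    rw [Finset.sum_Ico_succ_top hkn, Finset.sum_Ico_succ_top hkn]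
    have hs := step_id μ X g hmeas hindep hL2 hmean n
    linarith

end Aux

theorem EZstar_difference_bound
    {Ω : Type*} [MeasurableSpace Ω] (μ : Measure Ω) [IsProbabilityMeasure μ]
    (X : ℕ → Ω → ℝ) (g : ℕ → ℝ)
    (hmeas : ∀ k, Measurable (X k))
    (hindep : iIndepFun X μ)
    (hL2 : ∀ k, 1 ≤ k → MemLp (X k) 2 μ)
    (hmean : ∀ k, 1 ≤ k → ∫ ω, X k ω ∂μ = 0)
    (hvar : ∀ k, 1 ≤ k → 0 < ∫ ω, (X k ω) ^ 2 ∂μ)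
    (m n : ℕ) (hm : 1 ≤ m) (hmn : m ≤ n)
    (G : ℝ) (hG : IsGreatest {x : ℝ | ∃ k, 1 ≤ k ∧ k ≤ n ∧ |g k| = x} G) :
    ∀ k, m ≤ k → k ≤ n →
      |(∫ ω, Zstar X g k ω ∂μ) - ∫ ω, Zstar X g n ω ∂μ| ≤
        2 * G * (μ (Surv X g m)).toReal +
          ∫ ω in {ω | m < T X g ω ∧ T X g ω ≤ n}, -(Z X g (T X g ω) ω) ∂μ := by
  intro k hmk hkn
  have hk1 : 1 ≤ k := le_trans hm hmk
  -- notation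
  set P : ℕ → ℝ := fun j => (μ (Surv X g j)).toReal with hPdef
  set R : ℕ → ℝ := fun j => ∫ ω in Surv X g j \ Surv X g (j+1), Z X g (j+1) ω ∂μ with hRdef
  have hp0 : ∀ j, 0 ≤ P j := fun j => ENNReal.toReal_nonneg
  have hpa : ∀ i j, i ≤ j → P j ≤ P i := fun i j hij =>
    ENNReal.toReal_mono (measure_ne_top μ _) (measure_mono (Surv_antitone X g hij))
  have hGnn : 0 ≤ G := by
    obtain ⟨k', _, _, hk'⟩ := hG.1
    rw [← hk']; exact abs_nonneg _
  have hGbd : ∀ j, 1 ≤ j → j ≤ n → |g j| ≤ G := fun j h1 h2 => hG.2 ⟨j, h1, h2, rfl⟩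
  -- measurability and nonpositivity of R
  have hSet : ∀ j, MeasurableSet (Surv X g j \ Surv X g (j+1)) := fun j =>
    (measurableSet_Surv X g hmeas j).diff (measurableSet_Surv X g hmeas (j+1))
  have hRle : ∀ j, R j ≤ 0 := fun j =>
    setIntegral_nonpos (hSet j) (Z_nonpos_on_diff X g j)
  -- the identity
  have hid := sum_id μ X g hmeas hindep hL2 hmean hkn
  rw [hid]
  -- bound the boundary sum
  have habel := abel_bound g P G hk1 hkn hGbd hp0 hpa
  -- bound the overshoot sum
  have hRabs : |∑ j ∈ Finset.Ico k n, R j| ≤ ∑ j ∈ Finset.Ico k n, -R j := by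
    refine (Finset.abs_sum_le_sum_abs _ _).trans ?_
    refine Finset.sum_le_sum fun j _ => ?_
    rw [abs_of_nonpos (hRle j)]
  have hRmono : ∑ j ∈ Finset.Ico k n, -R j ≤ ∑ j ∈ Finset.Ico m n, -R j := by
    refine Finset.sum_le_sum_of_subset_of_nonneg
      (Finset.Ico_subset_Ico hmk le_rfl) fun j _ _ => ?_
    linarith [hRle j]
  -- identify the overshoot sum with the set integral
  have hRsum : ∑ j ∈ Finset.Ico m n, -R j
      = ∫ ω in {ω | m < T X g ω ∧ T X g ω ≤ n}, -(Z X g (T X g ω) ω) ∂μ := by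
    have hdisjp : Set.Pairwise ↑(Finset.Ico m n)
        (Function.onFun Disjoint fun j => Surv X g j \ Surv X g (j+1)) := by
      intro i _ j _ hne
      rw [Function.onFun, diff_eq_T, diff_eq_T, Set.disjoint_left]
      intro ω hωi hωj
      rw [Set.mem_setOf_eq] at hωi hωj
      omega
    have hIntOn : ∀ j ∈ Finset.Ico m n,
        IntegrableOn (fun ω => -(Z X g (T X g ω) ω)) (Surv X g j \ Surv X g (j+1)) μ := by
      intro j _
      refine IntegrableOn.congr_fun ((integrable_Z μ X g hL2 (j+1)).neg.integrableOn)
        (fun ω hω => ?_) (hSet j)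
      have hT : T X g ω = j + 1 := by
        rw [diff_eq_T] at hω; exact hω
      simp only [hT]; rfl
    rw [union_eq, integral_biUnion_finset _ (fun j _ => hSet j) hdisjp hIntOn]
    refine Finset.sum_congr rfl fun j hj => ?_
    rw [hRdef]
    rw [← integral_neg]
    refine (setIntegral_congr_fun (hSet j) fun ω hω => ?_).symm
    have hT : T X g ω = j + 1 := by rw [diff_eq_T] at hω; exact hω
    simp only [hT]
  -- put it together
  calc |(∑ j ∈ Finset.Ico k n, (g (j+1) - g j) * P j) + ∑ j ∈ Finset.Ico k n, R j|
      ≤ |∑ j ∈ Finset.Ico k n, (g (j+1) - g j) * P j| + |∑ j ∈ Finset.Ico k n, R j| :=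
        abs_add_le _ _
    _ ≤ 2 * G * P k + ∑ j ∈ Finset.Ico k n, -R j := add_le_add habel hRabs
    _ ≤ 2 * G * P m + ∑ j ∈ Finset.Ico m n, -R j := by
        refine add_le_add ?_ hRmono
        exact mul_le_mul_of_nonneg_left (hpa m k hmk) (by linarith)
    _ = _ := by rw [hRsum]
end FirstPassage
end
end

section
/- Let X₁,…,Xₙ be independent and suppose P(T_g > n) > 0. Then for every real x, P(Sₙ > x | T_g > n) ≥ P(Sₙ > x); equivalently, P(Sₙ > x, T_g > n) ≥ P(Sₙ > x)·P(T_g > n). -/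
open MeasureTheory ProbabilityTheory Filter Finset

noncomputable section
namespace FirstPassage

variable {Ω : Type*}

open scoped ENNReal

private lemma lintegral_mul_le_of_monotone' {α : Type*} [MeasurableSpace α] [LinearOrder α]
    (ν : Measure α) [IsProbabilityMeasure ν] {F G : α → ℝ≥0∞}
    (hF : Measurable F) (hG : Measurable G) (mF : Monotone F) (mG : Monotone G) :
    (∫⁻ x, F x ∂ν) * (∫⁻ x, G x ∂ν) ≤ ∫⁻ x, F x * G x ∂ν := by
  have key : ∀ x y : α, F x * G y + F y * G x ≤ F x * G x + F y * G y := by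
    intro x y
    have aux : ∀ a b c d : ℝ≥0∞, a ≤ b → c ≤ d → a * d + b * c ≤ a * c + b * d := by
      intro a b c d hab hcd
      obtain ⟨p, rfl⟩ := exists_add_of_le hab
      obtain ⟨q, rfl⟩ := exists_add_of_le hcd
      calc a * (c + q) + (a + p) * c = (a * c + (a + p) * c + a * q) := by ring
        _ ≤ (a * c + (a + p) * c + a * q) + p * q := le_self_add
        _ = a * c + (a + p) * (c + q) := by ring
    rcases le_total x y with h | h
    · exact aux _ _ _ _ (mF h) (mG h)
    · calc F x * G y + F y * G x = F y * G x + F x * G y := by ring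
        _ ≤ F y * G y + F x * G x := aux _ _ _ _ (mF h) (mG h)
        _ = F x * G x + F y * G y := by ring
  have h1 : ∫⁻ x, ∫⁻ y, (F x * G y + F y * G x) ∂ν ∂ν
      = 2 * ((∫⁻ x, F x ∂ν) * (∫⁻ x, G x ∂ν)) := by
    have inner : ∀ x, ∫⁻ y, (F x * G y + F y * G x) ∂ν
        = F x * (∫⁻ y, G y ∂ν) + (∫⁻ y, F y ∂ν) * G x := by
      intro x
      rw [lintegral_add_left (hG.const_mul _), lintegral_const_mul _ hG,
        lintegral_mul_const _ hF]
    simp_rw [inner]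
    rw [lintegral_add_left (hF.mul_const _), lintegral_mul_const _ hF,
      lintegral_const_mul _ hG, two_mul]
  have h2 : ∫⁻ x, ∫⁻ y, (F x * G x + F y * G y) ∂ν ∂ν
      = 2 * ∫⁻ x, F x * G x ∂ν := by
    have inner : ∀ x, ∫⁻ y, (F x * G x + F y * G y) ∂ν
        = F x * G x + ∫⁻ y, F y * G y ∂ν := by
      intro x
      rw [lintegral_add_left measurable_const, lintegral_const, measure_univ, mul_one]
    simp_rw [inner]
    rw [lintegral_add_right _ measurable_const, lintegral_const, measure_univ, mul_one,
      two_mul]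
  have h3 : ∫⁻ x, ∫⁻ y, (F x * G y + F y * G x) ∂ν ∂ν
      ≤ ∫⁻ x, ∫⁻ y, (F x * G x + F y * G y) ∂ν ∂ν :=
    lintegral_mono fun x => lintegral_mono fun y => key x y
  rw [h1, h2] at h3
  exact (ENNReal.mul_le_mul_iff_right two_ne_zero ENNReal.ofNat_ne_top).mp h3

private lemma harris_pi : ∀ (m : ℕ) (ν : Fin m → Measure ℝ), (∀ i, IsProbabilityMeasure (ν i)) →
    ∀ A B : Set (Fin m → ℝ), MeasurableSet A → MeasurableSet B →
    (∀ v w : Fin m → ℝ, v ≤ w → v ∈ A → w ∈ A) →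
    (∀ v w : Fin m → ℝ, v ≤ w → v ∈ B → w ∈ B) →
    Measure.pi ν A * Measure.pi ν B ≤ Measure.pi ν (A ∩ B) := by
  intro m
  induction m with
  | zero =>
    intro ν hν A B _ _ _ _
    haveI : ∀ i, IsProbabilityMeasure (ν i) := hν
    rcases A.eq_empty_or_nonempty with rfl | hA
    · simp
    rcases B.eq_empty_or_nonempty with rfl | hB
    · simp
    have hAu : A = Set.univ := hA.eq_univ
    have hBu : B = Set.univ := hB.eq_univ
    simp [hAu, hBu]
  | succ m ih =>
    intro ν hν A B hAm hBm hA hB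
    haveI : ∀ i, IsProbabilityMeasure (ν i) := hν
    set e := MeasurableEquiv.piFinSuccAbove (fun _ : Fin (m + 1) => ℝ) 0 with he
    have hmp := measurePreserving_piFinSuccAbove ν 0
    set ν' : Fin m → Measure ℝ := fun j => ν ((0 : Fin (m + 1)).succAbove j) with hν'
    set π' : Measure (Fin m → ℝ) := Measure.pi ν' with hπ'
    haveI : ∀ j, IsProbabilityMeasure (ν' j) := fun j => hν _
    set A' : Set (ℝ × (Fin m → ℝ)) := e.symm ⁻¹' A with hA'def
    set B' : Set (ℝ × (Fin m → ℝ)) := e.symm ⁻¹' B with hB'def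
    have hA' : MeasurableSet A' := hAm.preimage e.symm.measurable
    have hB' : MeasurableSet B' := hBm.preimage e.symm.measurable
    have hmpsymm : MeasurePreserving e.symm ((ν 0).prod π') (Measure.pi ν) := hmp.symm
    have hApre : ((ν 0).prod π') A' = Measure.pi ν A :=
      hmpsymm.measure_preimage_equiv A
    have hBpre : ((ν 0).prod π') B' = Measure.pi ν B :=
      hmpsymm.measure_preimage_equiv B
    have hABpre : ((ν 0).prod π') (A' ∩ B') = Measure.pi ν (A ∩ B) := by
      rw [hA'def, hB'def, ← Set.preimage_inter]
      exact hmpsymm.measure_preimage_equiv (A ∩ B)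
    -- slices
    have hesymm : ∀ (x : ℝ) (w : Fin m → ℝ),
        e.symm (x, w) = (Fin.insertNth 0 x w : Fin (m + 1) → ℝ) := by
      intro x w
      simp [he, MeasurableEquiv.piFinSuccAbove_symm_apply, Fin.insertNthEquiv]
    have hmono : ∀ (x x' : ℝ) (w w' : Fin m → ℝ), x ≤ x' → w ≤ w' →
        (Fin.insertNth 0 x w : Fin (m + 1) → ℝ) ≤ Fin.insertNth 0 x' w' := by
      intro x x' w w' hx hw
      rw [Fin.insertNth_le_iff]
      constructor
      · simpa using hx
      · intro j; simpa using hw j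
    set F : ℝ → ℝ≥0∞ := fun x => π' (Prod.mk x ⁻¹' A') with hF
    set G : ℝ → ℝ≥0∞ := fun x => π' (Prod.mk x ⁻¹' B') with hG
    have hFmeas : Measurable F := measurable_measure_prodMk_left hA'
    have hGmeas : Measurable G := measurable_measure_prodMk_left hB'
    have hFmono : Monotone F := by
      intro x x' hx
      refine measure_mono fun w hw => ?_
      have : e.symm (x, w) ∈ A := hw
      show e.symm (x', w) ∈ A
      rw [hesymm] at this ⊢
      exact hA _ _ (hmono x x' w w hx le_rfl) this
    have hGmono : Monotone G := by
      intro x x' hx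
      refine measure_mono fun w hw => ?_
      have : e.symm (x, w) ∈ B := hw
      show e.symm (x', w) ∈ B
      rw [hesymm] at this ⊢
      exact hB _ _ (hmono x x' w w hx le_rfl) this
    have hslice : ∀ x : ℝ, F x * G x ≤ π' (Prod.mk x ⁻¹' (A' ∩ B')) := by
      intro x
      rw [Set.preimage_inter]
      refine ih ν' (fun j => hν _) _ _ (hA'.preimage measurable_prodMk_left)
        (hB'.preimage measurable_prodMk_left) ?_ ?_
      · intro v w hvw hv
        have : e.symm (x, v) ∈ A := hv
        show e.symm (x, w) ∈ A
        rw [hesymm] at this ⊢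
        exact hA _ _ (hmono x x v w le_rfl hvw) this
      · intro v w hvw hv
        have : e.symm (x, v) ∈ B := hv
        show e.symm (x, w) ∈ B
        rw [hesymm] at this ⊢
        exact hB _ _ (hmono x x v w le_rfl hvw) this
    calc Measure.pi ν A * Measure.pi ν B
        = (∫⁻ x, F x ∂(ν 0)) * (∫⁻ x, G x ∂(ν 0)) := by
          rw [← hApre, ← hBpre, Measure.prod_apply hA', Measure.prod_apply hB']
      _ ≤ ∫⁻ x, F x * G x ∂(ν 0) :=
          lintegral_mul_le_of_monotone' _ hFmeas hGmeas hFmono hGmono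
      _ ≤ ∫⁻ x, π' (Prod.mk x ⁻¹' (A' ∩ B')) ∂(ν 0) := lintegral_mono hslice
      _ = Measure.pi ν (A ∩ B) := by
          rw [← Measure.prod_apply (hA'.inter hB'), hABpre]


theorem conditioned_walk_stochastically_larger
    {Ω : Type*} [MeasurableSpace Ω] (μ : Measure Ω) [IsProbabilityMeasure μ]
    (X : ℕ → Ω → ℝ) (g : ℕ → ℝ)
    (hmeas : ∀ k, Measurable (X k))
    (hindep : iIndepFun X μ)
    (n : ℕ) (hn : 0 < μ (Surv X g n)) :
    ∀ x : ℝ,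
      μ {ω | x < S X n ω} * μ (Surv X g n) ≤
        μ ({ω | x < S X n ω} ∩ Surv X g n) ∧
      (μ {ω | x < S X n ω}).toReal ≤
        (μ ({ω | x < S X n ω} ∩ Surv X g n)).toReal / (μ (Surv X g n)).toReal := by
  intro x
  classical
  set φ : Ω → (Fin n → ℝ) := fun ω i => X (i.1 + 1) ω with hφdef
  have hφ : Measurable φ := measurable_pi_lambda _ fun i => hmeas _
  set νi : Fin n → Measure ℝ := fun i => μ.map (X (i.1 + 1)) with hνidef
  haveI : ∀ i, IsProbabilityMeasure (νi i) := fun i =>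
    Measure.isProbabilityMeasure_map (hmeas _).aemeasurable
  set Sh : ℕ → (Fin n → ℝ) → ℝ := fun k v => ∑ i : Fin n, if i.1 < k then v i else 0
    with hShdef
  have hShmeas : ∀ k, Measurable (Sh k) := by
    intro k
    refine Finset.measurable_sum _ fun i _ => ?_
    by_cases h : i.1 < k <;> simp [h, measurable_pi_apply]
  have hShmono : ∀ k (v w : Fin n → ℝ), v ≤ w → Sh k v ≤ Sh k w := by
    intro k v w h
    refine Finset.sum_le_sum fun i _ => ?_
    by_cases hik : i.1 < k <;> simp [hik, h i]
  have hSeq : ∀ k, k ≤ n → ∀ ω, Sh k (φ ω) = S X k ω := by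
    intro k hk ω
    have h1 : Sh k (φ ω) = ∑ j ∈ Finset.range n, (if j < k then X (j + 1) ω else 0) := by
      rw [hShdef]
      exact Fin.sum_univ_eq_sum_range (fun j => if j < k then X (j + 1) ω else 0) n
    have h2 : (Finset.range n).filter (fun j => j < k) = Finset.range k := by
      ext j; simp only [Finset.mem_filter, Finset.mem_range]; omega
    rw [h1, ← Finset.sum_filter, h2, S, ← Finset.Ico_add_one_right_eq_Icc,
      Finset.sum_Ico_eq_sum_range]
    refine Finset.sum_congr (by simp) fun j _ => by rw [Nat.add_comm 1 j]
  -- the pushforward of `μ` under `φ` is the product measure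
  have hmap : μ.map φ = Measure.pi νi := by
    refine (Measure.pi_eq (μ := νi) fun s hs => ?_).symm
    rw [Measure.map_apply hφ (MeasurableSet.univ_pi hs)]
    set t : ℕ → Set ℝ := fun j => if h : 0 < j ∧ j ≤ n then s ⟨j - 1, by omega⟩ else Set.univ
      with htdef
    have ht : ∀ i : Fin n, t (i.1 + 1) = s i := by
      intro i
      simp only [htdef]
      rw [dif_pos ⟨Nat.succ_pos _, i.2⟩]
      exact congrArg s (Fin.ext (by simp))
    have htm : ∀ j, MeasurableSet (t j) := by
      intro j
      simp only [htdef]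
      by_cases h : 0 < j ∧ j ≤ n
      · rw [dif_pos h]; exact hs _
      · rw [dif_neg h]; exact MeasurableSet.univ
    have hpre : φ ⁻¹' Set.pi Set.univ s = ⋂ j ∈ Finset.Icc 1 n, X j ⁻¹' t j := by
      ext ω
      simp only [hφdef, Set.mem_preimage, Set.mem_pi, Set.mem_univ, forall_true_left,
        Set.mem_iInter, Finset.mem_Icc]
      constructor
      · rintro h j ⟨hj1, hj2⟩
        have hjn : j - 1 < n := by omega
        have h2 := h ⟨j - 1, hjn⟩
        rw [← ht ⟨j - 1, hjn⟩] at h2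
        have hj : (⟨j - 1, hjn⟩ : Fin n).1 + 1 = j := by simp only [Fin.val_mk]; omega
        rw [hj] at h2
        exact h2
      · intro h i
        have := h (i.1 + 1) ⟨by omega, by omega⟩
        rwa [ht i] at this
    rw [hpre, hindep.measure_inter_preimage_eq_mul _ (fun j _ => htm j)]
    have hcon : ∀ i : Fin n, νi i (s i) = μ (X (i.1 + 1) ⁻¹' t (i.1 + 1)) := by
      intro i
      rw [ht i, hνidef, Measure.map_apply (hmeas _) (hs i)]
    rw [Finset.prod_congr rfl (fun i _ => hcon i),
      Fin.prod_univ_eq_prod_range (fun j => μ (X (j + 1) ⁻¹' t (j + 1))) n,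
      ← Finset.Ico_add_one_right_eq_Icc, Finset.prod_Ico_eq_prod_range]
    refine Finset.prod_congr (by simp) fun j _ => by rw [Nat.add_comm 1 j]
  -- the events upstairs
  set Ah : Set (Fin n → ℝ) := {v | x < Sh n v} with hAhdef
  set Bh : Set (Fin n → ℝ) := {v | ∀ k ∈ Finset.Icc 1 n, g k < Sh k v} with hBhdef
  have hAhm : MeasurableSet Ah := measurableSet_lt measurable_const (hShmeas n)
  have hBhm : MeasurableSet Bh := by
    have : Bh = ⋂ k ∈ Finset.Icc 1 n, {v | g k < Sh k v} := by
      ext v; simp [hBhdef]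
    rw [this]
    exact Set.Finite.measurableSet_biInter (Finset.finite_toSet _)
      (fun k _ => measurableSet_lt measurable_const (hShmeas k))
  have hAhup : ∀ v w : Fin n → ℝ, v ≤ w → v ∈ Ah → w ∈ Ah := fun v w h hv =>
    lt_of_lt_of_le hv (hShmono n v w h)
  have hBhup : ∀ v w : Fin n → ℝ, v ≤ w → v ∈ Bh → w ∈ Bh := fun v w h hv k hk =>
    lt_of_lt_of_le (hv k hk) (hShmono k v w h)
  have hpreA : φ ⁻¹' Ah = {ω | x < S X n ω} := by
    ext ω
    simp only [Set.mem_preimage, hAhdef, Set.mem_setOf_eq, hSeq n le_rfl ω]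
  have hpreB : φ ⁻¹' Bh = Surv X g n := by
    ext ω
    simp only [Set.mem_preimage, hBhdef, Set.mem_setOf_eq, Surv]
    constructor
    · intro h k hk
      have := h k hk
      rwa [hSeq k (Finset.mem_Icc.mp hk).2 ω] at this
    · intro h k hk
      rw [hSeq k (Finset.mem_Icc.mp hk).2 ω]
      exact h k hk
  have e1 : Measure.pi νi Ah = μ {ω | x < S X n ω} := by
    rw [← hmap, Measure.map_apply hφ hAhm, hpreA]
  have e2 : Measure.pi νi Bh = μ (Surv X g n) := by
    rw [← hmap, Measure.map_apply hφ hBhm, hpreB]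
  have e3 : Measure.pi νi (Ah ∩ Bh) = μ ({ω | x < S X n ω} ∩ Surv X g n) := by
    rw [← hmap, Measure.map_apply hφ (hAhm.inter hBhm), Set.preimage_inter, hpreA, hpreB]
  have key : μ {ω | x < S X n ω} * μ (Surv X g n) ≤
      μ ({ω | x < S X n ω} ∩ Surv X g n) := by
    rw [← e1, ← e2, ← e3]
    exact harris_pi n νi inferInstance Ah Bh hAhm hBhm hAhup hBhup
  refine ⟨key, ?_⟩
  have hc : 0 < (μ (Surv X g n)).toReal :=
    ENNReal.toReal_pos hn.ne' (measure_ne_top μ _)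
  rw [le_div_iff₀ hc, ← ENNReal.toReal_mul]
  exact ENNReal.toReal_mono (measure_ne_top _ _) key
end FirstPassage
end
end
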